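/- Let {r_n} ⊂ (0, +∞) be an increasing unbounded sequence, {ε_n} ⊂ (0, +∞) a sequence with ε_n → 0, and λ ∈ Λ fixed. Suppose that: (1) A is closed; (2) Φ is lower semicontinuous at every point of A × {0}; (3) the function p ↦ ⟨λ, p⟩ is continuous at the origin; (4) σ has a valley at zero; (5) the function 𝓛(·, λ, r₁) is bounded below on A. Then any cluster point of a sequence {x_n} ⊂ A satisfying 𝓛(x_n, λ, r_n) ≤ inf_{x ∈ A} 𝓛(x, λ, r_n) + ε_n for all n ∈ ℕ is a globally optimal solution of the problem of minimizing f over A. -/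

import Mathlib

open Filter Topology Bornology Set

noncomputable section

/-- The augmented Lagrangian `𝓛(x, λ, r) = inf_p (Φ(x,p) − ⟨λ,p⟩ + r σ(p))`. -/
def AugLagr {X P L : Type*} [AddCommGroup P] [Module ℝ P] [AddCommGroup L] [Module ℝ L]
    (Φ : X × P → EReal) (B : L →ₗ[ℝ] P →ₗ[ℝ] ℝ) (σ : P → EReal)
    (x : X) (lam : L) (r : ℝ) : EReal :=
  ⨅ p : P, Φ (x, p) - ((B lam p : ℝ) : EReal) + (r : EReal) * σ p

/-- The optimal value (perturbation) function `v(p) = inf_{x ∈ A} Φ(x,p)`. -/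
def OptVal {X P : Type*} (A : Set X) (Φ : X × P → EReal) (p : P) : EReal :=
  ⨅ x ∈ A, Φ (x, p)

/-- `λ` is an augmented Lagrange multiplier: for some `r ≥ 0`,
`v(p) ≥ v(0) + ⟨λ,p⟩ − r σ(p)` for all `p`. -/
def IsAugMult {X P L : Type*} [AddCommGroup P] [Module ℝ P] [AddCommGroup L] [Module ℝ L]
    (A : Set X) (Φ : X × P → EReal) (B : L →ₗ[ℝ] P →ₗ[ℝ] ℝ) (σ : P → EReal) (lam : L) : Prop :=
  ∃ r : ℝ, 0 ≤ r ∧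
    ∀ p : P, OptVal A Φ 0 + ((B lam p : ℝ) : EReal) - (r : EReal) * σ p ≤ OptVal A Φ p

/-- The least exact penalty parameter `r(λ)`. -/
def rmin {X P L : Type*} [AddCommGroup P] [Module ℝ P] [AddCommGroup L] [Module ℝ L]
    (A : Set X) (Φ : X × P → EReal) (B : L →ₗ[ℝ] P →ₗ[ℝ] ℝ) (σ : P → EReal) (lam : L) : ℝ :=
  sInf {r : ℝ | 0 ≤ r ∧
    ∀ p : P, OptVal A Φ 0 + ((B lam p : ℝ) : EReal) - (r : EReal) * σ p ≤ OptVal A Φ p}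

/-- The augmented dual function `ψ(λ, r) = inf_{x ∈ A} 𝓛(x, λ, r)`. -/
def DualFun {X P L : Type*} [AddCommGroup P] [Module ℝ P] [AddCommGroup L] [Module ℝ L]
    (A : Set X) (Φ : X × P → EReal) (B : L →ₗ[ℝ] P →ₗ[ℝ] ℝ) (σ : P → EReal)
    (lam : L) (r : ℝ) : EReal :=
  ⨅ x ∈ A, AugLagr Φ B σ x lam r

/-- `λ` is a local augmented Lagrange multiplier at `xs`. -/
def IsLocalAugMult {X P L : Type*} [TopologicalSpace X]
    [AddCommGroup P] [Module ℝ P] [AddCommGroup L] [Module ℝ L]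
    (A : Set X) (f : X → EReal) (Φ : X × P → EReal)
    (B : L →ₗ[ℝ] P →ₗ[ℝ] ℝ) (σ : P → EReal) (xs : X) (lam : L) : Prop :=
  ∃ r₀ : ℝ, 0 ≤ r₀ ∧ ∀ r : ℝ, r₀ ≤ r →
    (∃ U ∈ 𝓝 xs, ∀ x ∈ U ∩ A, AugLagr Φ B σ xs lam r ≤ AugLagr Φ B σ x lam r) ∧
    AugLagr Φ B σ xs lam r = f xs

/-- `𝒜_loc`: the set of multipliers that are local augmented Lagrange multipliers at every
globally optimal solution of the problem. -/
def Aloc {X P L : Type*} [TopologicalSpace X]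
    [AddCommGroup P] [Module ℝ P] [AddCommGroup L] [Module ℝ L]
    (A : Set X) (f : X → EReal) (Φ : X × P → EReal)
    (B : L →ₗ[ℝ] P →ₗ[ℝ] ℝ) (σ : P → EReal) : Set L :=
  {lam | ∀ xs ∈ A, (∀ x ∈ A, f xs ≤ f x) → IsLocalAugMult A f Φ B σ xs lam}

/-- Any cluster point of a sequence of `ε_n`-minimizers of
`𝓛(·, λ, r_n)` on `A`, for an increasing unbounded sequence `r_n`, is a globally optimal
solution of the problem of minimizing `f` over `A`. -/
theorem clusterPt_of_approx_minimizers_is_optimal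
    {X P L : Type*} [TopologicalSpace X]
    [AddCommGroup P] [Module ℝ P] [TopologicalSpace P]
    [AddCommGroup L] [Module ℝ L]
    (A : Set X) (f : X → EReal) (Φ : X × P → EReal)
    (B : L →ₗ[ℝ] P →ₗ[ℝ] ℝ) (σ : P → EReal)
    (hA : A.Nonempty) (hdom : ∃ x ∈ A, f x ≠ ⊤) (hfbot : ∀ x, f x ≠ ⊥)
    (hfin : ∃ c : ℝ, (⨅ x ∈ A, f x) = (c : EReal))
    (hΦ : ∀ x, Φ (x, 0) = f x)
    (hσ0 : σ (0 : P) = 0) (hσpos : ∀ p : P, p ≠ 0 → 0 < σ p)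
    (lam : L)
    (rs : ℕ → ℝ) (hrs_pos : ∀ n, 0 < rs n) (hrs_mono : StrictMono rs)
    (hrs_unbdd : Tendsto rs atTop atTop)
    (eps : ℕ → ℝ) (heps_pos : ∀ n, 0 < eps n) (heps : Tendsto eps atTop (𝓝 (0 : ℝ)))
    (hAclosed : IsClosed A)
    (hΦlsc : ∀ x ∈ A, LowerSemicontinuousAt Φ (x, (0 : P)))
    (hBcont : ContinuousAt (fun p : P => (B lam p : ℝ)) (0 : P))
    (hvalley : ∀ U ∈ 𝓝 (0 : P), ∃ δ : ℝ, 0 < δ ∧ ∀ p ∉ U, (δ : EReal) ≤ σ p)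
    (hbdd : ∃ c : ℝ, ∀ x ∈ A, (c : EReal) ≤ AugLagr Φ B σ x lam (rs 0))
    (xs : ℕ → X) (hxsA : ∀ n, xs n ∈ A)
    (hxs_min : ∀ n, AugLagr Φ B σ (xs n) lam (rs n) ≤
      (⨅ x ∈ A, AugLagr Φ B σ x lam (rs n)) + ((eps n : ℝ) : EReal))
    (xstar : X) (hcluster : MapClusterPt xstar atTop xs) :
    xstar ∈ A ∧ ∀ x ∈ A, f xstar ≤ f x := by
  -- σ is nonnegative
  have hσnn : ∀ p : P, (0 : EReal) ≤ σ p := by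
    intro p
    by_cases hp : p = 0
    · simp [hp, hσ0]
    · exact (hσpos p hp).le
  -- xstar ∈ A
  have hmemA : xstar ∈ A := by
    have h2 : map xs atTop ≤ 𝓟 A := le_principal_iff.2 (Filter.mem_map.2 (Filter.Eventually.of_forall hxsA))
    have h3 : ClusterPt xstar (𝓟 A) := hcluster.clusterPt.mono h2
    have := mem_closure_iff_clusterPt.2 h3
    rwa [hAclosed.closure_eq] at this
  refine ⟨hmemA, ?_⟩
  obtain ⟨c, hc⟩ := hfin
  -- AugLagr ≤ f pointwise
  have hLle : ∀ (x : X) (r : ℝ), AugLagr Φ B σ x lam r ≤ f x := by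
    intro x r
    have := iInf_le (fun p : P => Φ (x, p) - ((B lam p : ℝ) : EReal) + (r : EReal) * σ p) (0 : P)
    simpa [AugLagr, hΦ x, hσ0, map_zero] using this
  by_contra hcon
  push_neg at hcon
  obtain ⟨x0, hx0A, hx0⟩ := hcon
  have hcf : (c : EReal) < f xstar := by
    calc (c : EReal) = ⨅ x ∈ A, f x := hc.symm
    _ ≤ f x0 := iInf₂_le x0 hx0A
    _ < f xstar := hx0
  obtain ⟨y, hy1, hy2⟩ := EReal.exists_between_coe_real hcf
  rw [EReal.coe_lt_coe_iff] at hy1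
  set β : ℝ := (y - c) / 2 with hβdef
  have hβ : 0 < β := by rw [hβdef]; linarith
  have hyβ : y - β = c + β := by ring
  -- lsc neighborhood
  have hlsc := hΦlsc xstar hmemA (y : EReal) (by show (y : EReal) < Φ (xstar, 0); rw [hΦ]; exact hy2)
  rw [nhds_prod_eq, Filter.eventually_prod_iff] at hlsc
  obtain ⟨pW, hpW, pU, hpU, hWU⟩ := hlsc
  -- continuity of the coupling
  have hBsmall : ∀ᶠ p in 𝓝 (0 : P), |(B lam p : ℝ)| < β := by
    have h0 : (B lam) 0 = 0 := map_zero _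
    have ht : Tendsto (fun p : P => (B lam p : ℝ)) (𝓝 0) (𝓝 0) := by
      simpa [ContinuousAt, h0] using hBcont
    have := Metric.tendsto_nhds.mp ht β hβ
    simpa [Real.dist_eq] using this
    -- combine neighborhoods
  obtain ⟨W, hW, hWsub⟩ : ∃ W ∈ 𝓝 xstar, ∀ x ∈ W, pW x := ⟨{x | pW x}, hpW, fun x hx => hx⟩
  obtain ⟨U0, hU0, hU0sub⟩ : ∃ U ∈ 𝓝 (0:P), ∀ p ∈ U, pU p := ⟨{p | pU p}, hpU, fun p hp => hp⟩
  obtain ⟨U1, hU1, hU1sub⟩ : ∃ U ∈ 𝓝 (0:P), ∀ p ∈ U, |(B lam p : ℝ)| < β :=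
    ⟨{p | |(B lam p : ℝ)| < β}, hBsmall, fun p hp => hp⟩
  obtain ⟨δ, hδpos, hδ⟩ := hvalley (U0 ∩ U1) (Filter.inter_mem hU0 hU1)
  obtain ⟨c₀, hc₀⟩ := hbdd
  set r₀ : ℝ := rs 0 with hr₀def
  set R : ℝ := r₀ + max 0 ((c + β - c₀) / δ) with hRdef
  -- pointwise bound on terms of AugLagr for x ∈ W ∩ A, r ≥ R
  have key : ∀ x ∈ A, x ∈ W → ∀ r : ℝ, R ≤ r →
      (((c + β : ℝ)) : EReal) ≤ AugLagr Φ B σ x lam r := by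
    intro x hxA hxW r hr
    have hterm0 : ∀ p : P, (c₀ : EReal) ≤ Φ (x, p) - ((B lam p : ℝ) : EReal) + (r₀ : EReal) * σ p := by
      intro p
      exact le_trans (hc₀ x hxA) (iInf_le _ p)
    have hrr₀ : r₀ ≤ r := le_trans (le_add_of_nonneg_right (le_max_left 0 _)) hr
    refine le_iInf fun p => ?_
    by_cases hpU : p ∈ U0 ∩ U1
    · -- Φ(x,p) > y, |⟨λ,p⟩| < β, rσ(p) ≥ 0
      have h1 : (y : EReal) < Φ (x, p) := hWU (hWsub x hxW) (hU0sub p hpU.1)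
      have h2 : |(B lam p : ℝ)| < β := hU1sub p hpU.2
      have h3 : (0 : EReal) ≤ (r : EReal) * σ p := by
        apply mul_nonneg _ (hσnn p)
        exact_mod_cast (lt_of_lt_of_le (hrs_pos 0) hrr₀).le
      calc (((c + β : ℝ)) : EReal) = ((y - β : ℝ) : EReal) := by rw [hyβ]
      _ ≤ Φ (x, p) - ((B lam p : ℝ) : EReal) := by
          rw [EReal.coe_sub]
          exact EReal.sub_le_sub h1.le (by exact_mod_cast (abs_lt.1 h2).2.le)
      _ = Φ (x, p) - ((B lam p : ℝ) : EReal) + 0 := by rw [add_zero]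
      _ ≤ Φ (x, p) - ((B lam p : ℝ) : EReal) + (r : EReal) * σ p := add_le_add_right h3 _
    · -- p outside the valley neighborhood
      have hσδ : (δ : EReal) ≤ σ p := hδ p hpU
      have ht : 0 ≤ r - r₀ := sub_nonneg.2 hrr₀
      have hsplit : (r : EReal) * σ p = (r₀ : EReal) * σ p + ((r - r₀ : ℝ) : EReal) * σ p := by
        rw [← EReal.right_distrib_of_nonneg (by exact_mod_cast (hrs_pos 0).le)
          (by exact_mod_cast ht)]
        norm_cast
        ring_nf
      have hmul : (((r - r₀) * δ : ℝ) : EReal) ≤ ((r - r₀ : ℝ) : EReal) * σ p := by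
        rw [EReal.coe_mul]
        exact mul_le_mul_of_nonneg_left hσδ (by exact_mod_cast ht)
      have htd : c + β - c₀ ≤ (r - r₀) * δ := by
        rcases le_or_gt (c + β - c₀) 0 with h | h
        · exact le_trans h (mul_nonneg ht hδpos.le)
        · have h4 : (c + β - c₀) / δ ≤ r - r₀ := by
            have : (c + β - c₀) / δ ≤ max 0 ((c + β - c₀) / δ) := le_max_right _ _
            linarith [hr, hRdef ▸ hr]
          calc c + β - c₀ = ((c + β - c₀) / δ) * δ := by field_simp
          _ ≤ (r - r₀) * δ := mul_le_mul_of_nonneg_right h4 hδpos.le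
      calc (((c + β : ℝ)) : EReal) ≤ ((c₀ + (r - r₀) * δ : ℝ) : EReal) := by
            exact_mod_cast by linarith
      _ = (c₀ : EReal) + (((r - r₀) * δ : ℝ) : EReal) := by rw [EReal.coe_add]
      _ ≤ (Φ (x, p) - ((B lam p : ℝ) : EReal) + (r₀ : EReal) * σ p)
            + ((r - r₀ : ℝ) : EReal) * σ p := add_le_add (hterm0 p) hmul
      _ = Φ (x, p) - ((B lam p : ℝ) : EReal) + (r : EReal) * σ p := by
            rw [hsplit, add_assoc]
  -- pick a good index n
  have hev : ∀ᶠ n in atTop, R ≤ rs n ∧ eps n < β :=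
    (hrs_unbdd.eventually_ge_atTop R).and (heps.eventually (gt_mem_nhds hβ))
  have hfreq : ∃ᶠ n in atTop, xs n ∈ W := mapClusterPt_iff_frequently.1 hcluster W hW
  obtain ⟨n, hnW, hnR, hnε⟩ := (hfreq.and_eventually hev).exists
  -- derive the contradiction
  have hub : (⨅ x ∈ A, AugLagr Φ B σ x lam (rs n)) ≤ (c : EReal) := by
    rw [← hc]
    exact iInf₂_mono fun x _ => hLle x (rs n)
  have hchain : (((c + β : ℝ)) : EReal) ≤ ((c + eps n : ℝ) : EReal) := by
    calc (((c + β : ℝ)) : EReal) ≤ AugLagr Φ B σ (xs n) lam (rs n) :=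
          key (xs n) (hxsA n) hnW (rs n) hnR
    _ ≤ (⨅ x ∈ A, AugLagr Φ B σ x lam (rs n)) + ((eps n : ℝ) : EReal) := hxs_min n
    _ ≤ (c : EReal) + ((eps n : ℝ) : EReal) := add_le_add_left hub _
    _ = ((c + eps n : ℝ) : EReal) := by rw [EReal.coe_add]
  rw [EReal.coe_le_coe_iff] at hchain
  linarith [hnε]
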